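/- For all positive integers n and d, the number of partitions with perimeter n into d-distinct parts equals the number of partitions with perimeter n into parts congruent to 1 modulo d+1. -/

import Mathlib

/-- A partition: a nonempty, nonincreasing list of positive integers. -/
def IsPartition (l : List ℕ) : Prop :=
  l ≠ [] ∧ l.Pairwise (· ≥ ·) ∧ ∀ x ∈ l, 0 < x

/-- Perimeter: (largest part) + (number of parts) - 1. -/
def perimeter (l : List ℕ) : ℕ := l.headI + l.length - 1

/-- d-distinct: consecutive parts differ by at least d. -/
def DDistinct (d : ℕ) (l : List ℕ) : Prop := l.Chain' (fun x y => y + d ≤ x)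

namespace Stmt2Aux

/-- tiling → partition into parts ≡ 1 (mod d+1) -/
def g (d : ℕ) : List ℕ → List ℕ
  | [] => [1]
  | t :: w => if t = 1 then g d w ++ [1] else (g d w).map (· + (d+1))

/-- tiling → d-distinct partition -/
def h (d : ℕ) : List ℕ → List ℕ
  | [] => [1]
  | t :: w => if t = 1 then (h d w).map (· + 1) else (h d w).map (· + d) ++ [1]

def Valid (d : ℕ) (w : List ℕ) : Prop := ∀ x ∈ w, x = 1 ∨ x = d + 1

lemma g_nil (d : ℕ) : g d [] = [1] := rfl
lemma g_cons (d t : ℕ) (w : List ℕ) :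
    g d (t :: w) = if t = 1 then g d w ++ [1] else (g d w).map (· + (d+1)) := rfl
lemma h_nil (d : ℕ) : h d [] = [1] := rfl
lemma h_cons (d t : ℕ) (w : List ℕ) :
    h d (t :: w) = if t = 1 then (h d w).map (· + 1) else (h d w).map (· + d) ++ [1] := rfl

lemma sum_map_add (c : ℕ) (l : List ℕ) :
    (l.map (· + c)).sum = l.sum + c * l.length := by
  induction l with
  | nil => simp
  | cons a t ih => simp [ih]; ring

lemma headI_map_add (c : ℕ) (l : List ℕ) (hl : l ≠ []) :
    (l.map (· + c)).headI = l.headI + c := by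
  cases l with
  | nil => exact absurd rfl hl
  | cons a t => simp

lemma headI_append (l l' : List ℕ) (hl : l ≠ []) :
    (l ++ l').headI = l.headI := by
  cases l with
  | nil => exact absurd rfl hl
  | cons a t => simp

lemma getLast?_map (f : ℕ → ℕ) : ∀ (l : List ℕ), (l.map f).getLast? = l.getLast?.map f
  | [] => rfl
  | [a] => rfl
  | a :: b :: t => by
    have h1 : (List.map f (a :: b :: t)) = f a :: f b :: List.map f t := rfl
    have h2 : (f b :: List.map f t) = List.map f (b :: t) := rfl
    rw [h1, List.getLast?_cons_cons, List.getLast?_cons_cons, h2]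
    exact getLast?_map f (b :: t)

/-! ### properties of g -/

lemma g_ne_nil (d : ℕ) (w : List ℕ) : g d w ≠ [] := by
  induction w with
  | nil => simp [g_nil]
  | cons t w ih =>
    rw [g_cons]
    split
    · simp
    · simpa using ih

lemma g_mod (d : ℕ) (w : List ℕ) : ∀ x ∈ g d w, x % (d+1) = 1 % (d+1) := by
  induction w with
  | nil => simp [g_nil]
  | cons t w ih =>
    rw [g_cons]
    split
    · intro x hx
      rcases List.mem_append.mp hx with hx | hx
      · exact ih x hx
      · simp at hx; simp [hx]
    · intro x hx
      rcases List.mem_map.mp hx with ⟨y, hy, rfl⟩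
      rw [Nat.add_mod_right]
      exact ih y hy

lemma g_pos (d : ℕ) (w : List ℕ) : ∀ x ∈ g d w, 0 < x := by
  induction w with
  | nil => simp [g_nil]
  | cons t w ih =>
    rw [g_cons]
    split
    · intro x hx
      rcases List.mem_append.mp hx with hx | hx
      · exact ih x hx
      · simp at hx; simp [hx]
    · intro x hx
      rcases List.mem_map.mp hx with ⟨y, hy, rfl⟩
      exact Nat.lt_of_lt_of_le (ih y hy) (Nat.le_add_right _ _)

lemma g_sorted (d : ℕ) (w : List ℕ) : (g d w).Pairwise (· ≥ ·) := by
  induction w with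
  | nil => simp [g_nil]
  | cons t w ih =>
    rw [g_cons]
    split
    · rw [List.pairwise_append]
      refine ⟨ih, by simp, ?_⟩
      intro a ha b hb
      simp at hb
      subst hb
      exact g_pos d w a ha
    · exact List.Pairwise.map _ (fun a b hab => by omega) ih

lemma g_head_len (d : ℕ) (w : List ℕ) (hw : Valid d w) :
    (g d w).headI + (g d w).length = w.sum + 2 := by
  induction w with
  | nil => simp [g_nil]
  | cons t w ih =>
    have ht := hw t (by simp)
    have ih' := ih (fun x hx => hw x (List.mem_cons_of_mem _ hx))
    rw [g_cons]
    rcases ht with rfl | rfl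
    · rw [if_pos rfl, headI_append _ _ (g_ne_nil d w), List.length_append]
      simp only [List.sum_cons, List.length_cons, List.length_nil]
      omega
    · by_cases hd0 : d = 0
      · subst hd0
        rw [if_pos rfl, headI_append _ _ (g_ne_nil 0 w), List.length_append]
        simp only [List.sum_cons, List.length_cons, List.length_nil]
        omega
      · rw [if_neg (by omega), headI_map_add _ _ (g_ne_nil d w), List.length_map]
        simp only [List.sum_cons]
        omega

lemma g_inj (d : ℕ) (hd : 0 < d) : ∀ w₁ w₂, Valid d w₁ → Valid d w₂ →
    g d w₁ = g d w₂ → w₁ = w₂ := by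
  intro w₁
  induction w₁ with
  | nil =>
    intro w₂ _ hv₂ he
    cases w₂ with
    | nil => rfl
    | cons t w =>
      exfalso
      rw [g_nil] at he
      rcases hv₂ t (by simp) with rfl | rfl
      · rw [g_cons, if_pos rfl] at he
        have hlen := congrArg List.length he
        rw [List.length_append] at hlen
        simp only [List.length_singleton] at hlen
        have : g d w = [] := List.length_eq_zero_iff.mp (by omega)
        exact g_ne_nil d w this
      · rw [g_cons, if_neg (by omega)] at he
        have := congrArg List.getLast? he
        rw [getLast?_map] at this
        rcases hx : (g d w).getLast? with _ | y
        · rw [hx] at this; simp at this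
        · rw [hx] at this
          simp at this
          omega
  | cons t₁ w₁ ih =>
    intro w₂ hv₁ hv₂ he
    cases w₂ with
    | nil =>
      exfalso
      rw [g_nil] at he
      rcases hv₁ t₁ (by simp) with rfl | rfl
      · rw [g_cons, if_pos rfl] at he
        have hlen := congrArg List.length he
        rw [List.length_append] at hlen
        simp only [List.length_singleton] at hlen
        have : g d w₁ = [] := List.length_eq_zero_iff.mp (by omega)
        exact g_ne_nil d w₁ this
      · rw [g_cons, if_neg (by omega)] at he
        have := congrArg List.getLast? he
        rw [getLast?_map] at this
        rcases hx : (g d w₁).getLast? with _ | y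
        · rw [hx] at this; simp at this
        · rw [hx] at this
          simp at this
          omega
    | cons t₂ w₂ =>
      have hv₁' : Valid d w₁ := fun x hx => hv₁ x (List.mem_cons_of_mem _ hx)
      have hv₂' : Valid d w₂ := fun x hx => hv₂ x (List.mem_cons_of_mem _ hx)
      rcases hv₁ t₁ (by simp) with rfl | rfl <;> rcases hv₂ t₂ (by simp) with rfl | rfl
      · rw [g_cons, g_cons, if_pos rfl, if_pos rfl] at he
        have := (List.append_inj' he (by simp)).1
        rw [ih w₂ hv₁' hv₂' this]
      · exfalso
        rw [g_cons, g_cons, if_pos rfl, if_neg (by omega)] at he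
        have := congrArg List.getLast? he
        rw [List.getLast?_concat, getLast?_map] at this
        rcases hx : (g d w₂).getLast? with _ | y
        · rw [hx] at this; simp at this
        · rw [hx] at this; simp at this; omega
      · exfalso
        rw [g_cons, g_cons, if_pos rfl, if_neg (by omega)] at he
        have := congrArg List.getLast? he.symm
        rw [List.getLast?_concat, getLast?_map] at this
        rcases hx : (g d w₁).getLast? with _ | y
        · rw [hx] at this; simp at this
        · rw [hx] at this; simp at this; omega
      · rw [g_cons, g_cons, if_neg (by omega), if_neg (by omega)] at he
        have := List.map_injective_iff.mpr (add_left_injective (d+1)) he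
        rw [ih w₂ hv₁' hv₂' this]

lemma g_surj (d : ℕ) (hd : 0 < d) : ∀ N l, l.sum ≤ N → l ≠ [] → l.Pairwise (· ≥ ·) →
    (∀ x ∈ l, x % (d+1) = 1 % (d+1)) → ∃ w, Valid d w ∧ g d w = l := by
  intro N
  induction N with
  | zero =>
    intro l hsum hne hsort hmod
    exfalso
    cases l with
    | nil => exact hne rfl
    | cons a t =>
      have h1 : 1 % (d+1) = 1 := Nat.mod_eq_of_lt (by omega)
      have hmoda := hmod a (by simp)
      rw [h1] at hmoda
      have : 0 < a := by
        rcases Nat.eq_zero_or_pos a with rfl | hpa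
        · simp at hmoda
        · exact hpa
      have : a ≤ (a :: t).sum := List.le_sum_of_mem (by simp)
      omega
  | succ N ihN =>
    intro l hsum hne hsort hmod
    have h1 : 1 % (d+1) = 1 := Nat.mod_eq_of_lt (by omega)
    set b := l.getLast hne with hb
    have hbmem : b ∈ l := List.getLast_mem hne
    have hbmod : b % (d+1) = 1 := by
      have := hmod b hbmem
      rw [h1] at this
      exact this
    have hbpos : 0 < b := by
      rcases Nat.eq_zero_or_pos b with heq | hpb
      · rw [heq] at hbmod; simp at hbmod
      · exact hpb
    have hdrop : l.dropLast ++ [b] = l := List.dropLast_append_getLast hne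
    have hge : ∀ x ∈ l.dropLast, b ≤ x := by
      intro x hx
      have := hsort
      rw [← hdrop, List.pairwise_append] at this
      exact this.2.2 x hx b (by simp)
    by_cases hb1 : b = 1
    · -- smallest part = 1
      cases hld : l.dropLast with
      | nil =>
        refine ⟨[], by simp [Valid], ?_⟩
        have : l = [b] := by rw [← hdrop, hld]; simp
        rw [this, hb1]; rfl
      | cons a t =>
        have hdne : l.dropLast ≠ [] := by rw [hld]; simp
        have hdsort : l.dropLast.Pairwise (· ≥ ·) :=
          List.Pairwise.sublist (List.dropLast_sublist l) hsort
        have hdmod : ∀ x ∈ l.dropLast, x % (d+1) = 1 % (d+1) :=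
          fun x hx => hmod x (List.mem_of_mem_dropLast hx)
        have hdsum : l.dropLast.sum ≤ N := by
          have : l.dropLast.sum + 1 = l.sum := by
            conv_rhs => rw [← hdrop]
            simp [hb1]
          omega
        obtain ⟨w, hw, hgw⟩ := ihN l.dropLast hdsum hdne hdsort hdmod
        refine ⟨1 :: w, ?_, ?_⟩
        · intro x hx
          rcases List.mem_cons.mp hx with rfl | hx
          · left; rfl
          · exact hw x hx
        · rw [g_cons, if_pos rfl, hgw]
          exact hb1 ▸ hdrop
    · -- smallest part ≥ d+2 : subtract d+1 from everything
      have hbge : d + 2 ≤ b := by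
        rcases Nat.lt_or_ge b (d+1) with hlt | hge'
        · rw [Nat.mod_eq_of_lt hlt] at hbmod; omega
        · rcases Nat.eq_or_lt_of_le hge' with heq | hlt
          · exfalso; rw [← heq, Nat.mod_self] at hbmod; omega
          · omega
      have hallge : ∀ x ∈ l, d + 2 ≤ x := by
        intro x hx
        rw [← hdrop, List.mem_append] at hx
        rcases hx with hx | hx
        · exact le_trans hbge (hge x hx)
        · simp at hx; omega
      set l' := l.map (· - (d+1)) with hl'
      have hcanc : l'.map (· + (d+1)) = l := by
        rw [hl', List.map_map]
        conv_rhs => rw [← List.map_id l]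
        apply List.map_congr_left
        intro x hx
        have := hallge x hx
        simp; omega
      have hl'ne : l' ≠ [] := by
        rw [hl', ← List.length_pos_iff, List.length_map, List.length_pos_iff]
        exact hne
      have hl'sort : l'.Pairwise (· ≥ ·) :=
        List.Pairwise.map _ (fun a b hab => Nat.sub_le_sub_right hab _) hsort
      have hl'mod : ∀ x ∈ l', x % (d+1) = 1 % (d+1) := by
        intro x hx
        rcases List.mem_map.mp hx with ⟨y, hy, rfl⟩
        have hy2 := hallge y hy
        have hyc : y - (d+1) + (d+1) = y := by omega
        have h2 : (y - (d+1)) % (d+1) = y % (d+1) := by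
          conv_rhs => rw [← hyc, Nat.add_mod_right]
        rw [h2]
        exact hmod y hy
      have hl'sum : l'.sum ≤ N := by
        have hs := sum_map_add (d+1) l'
        rw [hcanc] at hs
        have hlen : 1 ≤ l'.length := List.length_pos_iff.mpr hl'ne
        have : l'.sum + (d+1) ≤ l.sum := by nlinarith
        omega
      obtain ⟨w, hw, hgw⟩ := ihN l' hl'sum hl'ne hl'sort hl'mod
      refine ⟨(d+1) :: w, ?_, ?_⟩
      · intro x hx
        rcases List.mem_cons.mp hx with rfl | hx
        · right; rfl
        · exact hw x hx
      · rw [g_cons, if_neg (by omega), hgw, hcanc]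

/-! ### properties of h -/

lemma h_ne_nil (d : ℕ) (w : List ℕ) : h d w ≠ [] := by
  induction w with
  | nil => simp [h_nil]
  | cons t w ih =>
    rw [h_cons]
    split
    · simpa using ih
    · simp

lemma h_pos (d : ℕ) (w : List ℕ) : ∀ x ∈ h d w, 0 < x := by
  induction w with
  | nil => simp [h_nil]
  | cons t w ih =>
    rw [h_cons]
    split
    · intro x hx
      rcases List.mem_map.mp hx with ⟨y, hy, rfl⟩
      omega
    · intro x hx
      rcases List.mem_append.mp hx with hx | hx
      · rcases List.mem_map.mp hx with ⟨y, hy, rfl⟩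
        have := ih y hy; omega
      · simp at hx; omega

lemma h_sorted (d : ℕ) (w : List ℕ) : (h d w).Pairwise (· ≥ ·) := by
  induction w with
  | nil => simp [h_nil]
  | cons t w ih =>
    rw [h_cons]
    split
    · exact List.Pairwise.map _ (fun a b hab => by omega) ih
    · rw [List.pairwise_append]
      refine ⟨List.Pairwise.map _ (fun a b hab => by omega) ih, by simp, ?_⟩
      intro a ha b hb
      simp at hb
      subst hb
      rcases List.mem_map.mp ha with ⟨y, hy, rfl⟩
      have := h_pos d w y hy
      omega

lemma h_chain (d : ℕ) (w : List ℕ) : DDistinct d (h d w) := by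
  induction w with
  | nil => simp [h_nil, DDistinct, List.Chain']
  | cons t w ih =>
    rw [DDistinct, List.Chain', h_cons]
    split
    · rw [List.isChain_map]
      exact List.IsChain.imp (fun a b hab => by omega) ih
    · rw [List.isChain_append]
      refine ⟨?_, by simp, ?_⟩
      · rw [List.isChain_map]
        exact List.IsChain.imp (fun a b hab => by omega) ih
      · intro x hx y hy
        simp at hy
        subst hy
        have hx' := List.mem_of_mem_getLast? hx
        rcases List.mem_map.mp hx' with ⟨z, hz, rfl⟩
        have := h_pos d w z hz
        omega

lemma h_head_len (d : ℕ) (w : List ℕ) (hw : Valid d w) (hd : 0 < d) :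
    (h d w).headI + (h d w).length = w.sum + 2 := by
  induction w with
  | nil => simp [h_nil]
  | cons t w ih =>
    have ht := hw t (by simp)
    have ih' := ih (fun x hx => hw x (List.mem_cons_of_mem _ hx))
    rw [h_cons]
    rcases ht with rfl | rfl
    · rw [if_pos rfl, headI_map_add _ _ (h_ne_nil d w), List.length_map]
      simp only [List.sum_cons]
      omega
    · rw [if_neg (by omega), headI_append _ _ (by simpa using h_ne_nil d w),
        headI_map_add _ _ (h_ne_nil d w), List.length_append, List.length_map]
      simp only [List.sum_cons, List.length_singleton]
      omega

lemma h_inj (d : ℕ) (hd : 0 < d) : ∀ w₁ w₂, Valid d w₁ → Valid d w₂ →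
    h d w₁ = h d w₂ → w₁ = w₂ := by
  intro w₁
  induction w₁ with
  | nil =>
    intro w₂ _ hv₂ he
    cases w₂ with
    | nil => rfl
    | cons t w =>
      exfalso
      rw [h_nil] at he
      rcases hv₂ t (by simp) with rfl | rfl
      · rw [h_cons, if_pos rfl] at he
        cases hw : h d w with
        | nil => exact h_ne_nil d w hw
        | cons a s =>
          rw [hw] at he
          simp at he
          have := h_pos d w a (by rw [hw]; simp)
          omega
      · rw [h_cons, if_neg (by omega)] at he
        have hlen := congrArg List.length he
        rw [List.length_append, List.length_map] at hlen
        simp only [List.length_singleton] at hlen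
        have : h d w = [] := List.length_eq_zero_iff.mp (by omega)
        exact h_ne_nil d w this
  | cons t₁ w₁ ih =>
    intro w₂ hv₁ hv₂ he
    cases w₂ with
    | nil =>
      exfalso
      rw [h_nil] at he
      rcases hv₁ t₁ (by simp) with rfl | rfl
      · rw [h_cons, if_pos rfl] at he
        cases hw : h d w₁ with
        | nil => exact h_ne_nil d w₁ hw
        | cons a s =>
          rw [hw] at he
          simp at he
          have := h_pos d w₁ a (by rw [hw]; simp)
          omega
      · rw [h_cons, if_neg (by omega)] at he
        have hlen := congrArg List.length he
        rw [List.length_append, List.length_map] at hlen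
        simp only [List.length_singleton] at hlen
        have : h d w₁ = [] := List.length_eq_zero_iff.mp (by omega)
        exact h_ne_nil d w₁ this
    | cons t₂ w₂ =>
      have hv₁' : Valid d w₁ := fun x hx => hv₁ x (List.mem_cons_of_mem _ hx)
      have hv₂' : Valid d w₂ := fun x hx => hv₂ x (List.mem_cons_of_mem _ hx)
      rcases hv₁ t₁ (by simp) with rfl | rfl <;> rcases hv₂ t₂ (by simp) with rfl | rfl
      · rw [h_cons, h_cons, if_pos rfl, if_pos rfl] at he
        have := List.map_injective_iff.mpr (add_left_injective 1) he
        rw [ih w₂ hv₁' hv₂' this]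
      · exfalso
        rw [h_cons, h_cons, if_pos rfl, if_neg (by omega)] at he
        have := congrArg List.getLast? he
        rw [List.getLast?_concat, getLast?_map] at this
        rcases hx : (h d w₁).getLast? with _ | y
        · rw [hx] at this; simp at this
        · rw [hx] at this; simp at this
          have := h_pos d w₁ y (List.mem_of_mem_getLast? (hx ▸ rfl))
          omega
      · exfalso
        rw [h_cons, h_cons, if_pos rfl, if_neg (by omega)] at he
        have := congrArg List.getLast? he.symm
        rw [List.getLast?_concat, getLast?_map] at this
        rcases hx : (h d w₂).getLast? with _ | y
        · rw [hx] at this; simp at this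
        · rw [hx] at this; simp at this
          have := h_pos d w₂ y (List.mem_of_mem_getLast? (hx ▸ rfl))
          omega
      · rw [h_cons, h_cons, if_neg (by omega), if_neg (by omega)] at he
        have := (List.append_inj' he (by simp)).1
        have := List.map_injective_iff.mpr (add_left_injective d) this
        rw [ih w₂ hv₁' hv₂' this]

lemma chain'_map_sub (d c : ℕ) : ∀ l : List ℕ, (∀ x ∈ l, c ≤ x) →
    l.Chain' (fun x y => y + d ≤ x) → (l.map (· - c)).Chain' (fun x y => y + d ≤ x)
  | [] => by simp
  | [a] => by simp [List.Chain']
  | a :: b :: t => by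
    intro hle hch
    rw [List.Chain', List.isChain_cons_cons] at hch
    have hmc : (a :: b :: t).map (· - c) = (a - c) :: (b :: t).map (· - c) := rfl
    rw [hmc, List.Chain', List.isChain_cons]
    constructor
    · intro y hy
      have hb := hle b (by simp)
      have hh : ((b :: t).map (· - c)).head? = some (b - c) := rfl
      rw [hh] at hy
      simp at hy
      have := hch.1
      omega
    · exact chain'_map_sub d c (b :: t) (fun x hx => hle x (List.mem_cons_of_mem _ hx)) hch.2

lemma h_surj (d : ℕ) (hd : 0 < d) : ∀ N l, l.sum ≤ N → l ≠ [] → l.Pairwise (· ≥ ·) →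
    (∀ x ∈ l, 0 < x) → DDistinct d l → ∃ w, Valid d w ∧ h d w = l := by
  intro N
  induction N with
  | zero =>
    intro l hsum hne hsort hpos hch
    exfalso
    cases l with
    | nil => exact hne rfl
    | cons a t =>
      have := hpos a (by simp)
      have : a ≤ (a :: t).sum := List.le_sum_of_mem (by simp)
      omega
  | succ N ihN =>
    intro l hsum hne hsort hpos hch
    set b := l.getLast hne with hb
    have hbmem : b ∈ l := List.getLast_mem hne
    have hbpos : 0 < b := hpos b hbmem
    have hdrop : l.dropLast ++ [b] = l := List.dropLast_append_getLast hne
    by_cases hb1 : b = 1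
    · cases hld : l.dropLast with
      | nil =>
        refine ⟨[], by simp [Valid], ?_⟩
        have : l = [b] := by rw [← hdrop, hld]; simp
        rw [this, hb1]; rfl
      | cons a t =>
        have hdne : l.dropLast ≠ [] := by rw [hld]; simp
        have hchsplit := hch
        rw [DDistinct, List.Chain', ← hdrop, List.isChain_append] at hchsplit
        obtain ⟨hch₀, -, hjun⟩ := hchsplit
        have hlastge : ∀ x ∈ l.dropLast.getLast?, 1 + d ≤ x := by
          intro x hx
          have := hjun x hx b (by simp)
          omega
        have hdsort : l.dropLast.Pairwise (· ≥ ·) :=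
          List.Pairwise.sublist (List.dropLast_sublist l) hsort
        have hge : ∀ x ∈ l.dropLast, d + 1 ≤ x := by
          intro x hx
          have hlast : l.dropLast.getLast hdne ∈ l.dropLast.getLast? := by
            rw [List.getLast?_eq_getLast hdne]; rfl
          have h1 := hlastge _ hlast
          have h2 : l.dropLast.getLast hdne ≤ x := by
            have hdrop2 : l.dropLast.dropLast ++ [l.dropLast.getLast hdne] = l.dropLast :=
              List.dropLast_append_getLast hdne
            rw [← hdrop2, List.mem_append] at hx
            rcases hx with hx | hx
            · have := hdsort
              rw [← hdrop2, List.pairwise_append] at this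
              exact this.2.2 x hx _ (by simp)
            · simp at hx; omega
          omega
        set l' := l.dropLast.map (· - d) with hl'
        have hcanc : l'.map (· + d) = l.dropLast := by
          rw [hl', List.map_map]
          conv_rhs => rw [← List.map_id l.dropLast]
          apply List.map_congr_left
          intro x hx
          have := hge x hx
          simp; omega
        have hl'ne : l' ≠ [] := by
          rw [hl', ← List.length_pos_iff, List.length_map, List.length_pos_iff]
          exact hdne
        have hl'sort : l'.Pairwise (· ≥ ·) :=
          List.Pairwise.map _ (fun a b hab => Nat.sub_le_sub_right hab _) hdsort
        have hl'pos : ∀ x ∈ l', 0 < x := by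
          intro x hx
          rcases List.mem_map.mp hx with ⟨y, hy, rfl⟩
          have := hge y hy
          omega
        have hl'ch : DDistinct d l' :=
          chain'_map_sub d d l.dropLast (fun x hx => by have := hge x hx; omega) hch₀
        have hl'sum : l'.sum ≤ N := by
          have hs := sum_map_add d l'
          rw [hcanc] at hs
          have hsum1 : l.dropLast.sum + 1 = l.sum := by
            conv_rhs => rw [← hdrop]
            simp [hb1]
          have : l'.sum ≤ l.dropLast.sum := by omega
          omega
        obtain ⟨w, hw, hgw⟩ := ihN l' hl'sum hl'ne hl'sort hl'pos hl'ch
        refine ⟨(d+1) :: w, ?_, ?_⟩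
        · intro x hx
          rcases List.mem_cons.mp hx with rfl | hx
          · right; rfl
          · exact hw x hx
        · rw [h_cons, if_neg (by omega), hgw, hcanc]
          exact hb1 ▸ hdrop
    · -- smallest part ≥ 2 : subtract 1 from everything
      have hallge : ∀ x ∈ l, 2 ≤ x := by
        intro x hx
        have h2 : b ≤ x := by
          rw [← hdrop, List.mem_append] at hx
          rcases hx with hx | hx
          · have := hsort
            rw [← hdrop, List.pairwise_append] at this
            exact this.2.2 x hx b (by simp)
          · simp at hx; omega
        omega
      set l' := l.map (· - 1) with hl'
      have hcanc : l'.map (· + 1) = l := by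
        rw [hl', List.map_map]
        conv_rhs => rw [← List.map_id l]
        apply List.map_congr_left
        intro x hx
        have := hallge x hx
        simp; omega
      have hl'ne : l' ≠ [] := by
        rw [hl', ← List.length_pos_iff, List.length_map, List.length_pos_iff]
        exact hne
      have hl'sort : l'.Pairwise (· ≥ ·) :=
        List.Pairwise.map _ (fun a b hab => Nat.sub_le_sub_right hab _) hsort
      have hl'pos : ∀ x ∈ l', 0 < x := by
        intro x hx
        rcases List.mem_map.mp hx with ⟨y, hy, rfl⟩
        have := hallge y hy
        omega
      have hl'ch : DDistinct d l' :=
        chain'_map_sub d 1 l (fun x hx => by have := hallge x hx; omega) hch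
      have hl'sum : l'.sum ≤ N := by
        have hs := sum_map_add 1 l'
        rw [hcanc] at hs
        have hlen : 1 ≤ l'.length := List.length_pos_iff.mpr hl'ne
        omega
      obtain ⟨w, hw, hgw⟩ := ihN l' hl'sum hl'ne hl'sort hl'pos hl'ch
      refine ⟨1 :: w, ?_, ?_⟩
      · intro x hx
        rcases List.mem_cons.mp hx with rfl | hx
        · left; rfl
        · exact hw x hx
      · rw [h_cons, if_pos rfl, hgw, hcanc]

end Stmt2Aux

open Stmt2Aux in
theorem stmt2 (n d : ℕ) (hn : 0 < n) (hd : 0 < d) :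
    Nat.card {l : List ℕ // IsPartition l ∧ perimeter l = n ∧ DDistinct d l}
      = Nat.card {l : List ℕ // IsPartition l ∧ perimeter l = n ∧
          ∀ x ∈ l, x % (d + 1) = 1 % (d + 1)} := by
  have eA : {w : List ℕ // Valid d w ∧ w.sum + 1 = n} ≃
      {l : List ℕ // IsPartition l ∧ perimeter l = n ∧ DDistinct d l} := by
    refine Equiv.ofBijective (fun w => ⟨h d w.1, ⟨h_ne_nil d w.1, h_sorted d w.1, h_pos d w.1⟩,
      ?_, h_chain d w.1⟩) ⟨?_, ?_⟩
    · have := h_head_len d w.1 w.2.1 hd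
      have hw := w.2.2
      unfold perimeter
      omega
    · intro w₁ w₂ hw
      have := congrArg Subtype.val hw
      exact Subtype.ext (h_inj d hd w₁.1 w₂.1 w₁.2.1 w₂.2.1 this)
    · intro l
      obtain ⟨w, hwv, hwl⟩ := h_surj d hd l.1.sum l.1 le_rfl l.2.1.1 l.2.1.2.1 l.2.1.2.2 l.2.2.2
      have hhl := h_head_len d w hwv hd
      rw [hwl] at hhl
      have hper := l.2.2.1
      unfold perimeter at hper
      refine ⟨⟨w, hwv, by omega⟩, Subtype.ext hwl⟩
  have eB : {w : List ℕ // Valid d w ∧ w.sum + 1 = n} ≃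
      {l : List ℕ // IsPartition l ∧ perimeter l = n ∧
        ∀ x ∈ l, x % (d + 1) = 1 % (d + 1)} := by
    refine Equiv.ofBijective (fun w => ⟨g d w.1, ⟨g_ne_nil d w.1, g_sorted d w.1, g_pos d w.1⟩,
      ?_, g_mod d w.1⟩) ⟨?_, ?_⟩
    · have := g_head_len d w.1 w.2.1
      have hw := w.2.2
      unfold perimeter
      omega
    · intro w₁ w₂ hw
      have := congrArg Subtype.val hw
      exact Subtype.ext (g_inj d hd w₁.1 w₂.1 w₁.2.1 w₂.2.1 this)
    · intro l
      obtain ⟨w, hwv, hwl⟩ := g_surj d hd l.1.sum l.1 le_rfl l.2.1.1 l.2.1.2.1 l.2.2.2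
      have hhl := g_head_len d w hwv
      rw [hwl] at hhl
      have hper := l.2.2.1
      unfold perimeter at hper
      refine ⟨⟨w, hwv, by omega⟩, Subtype.ext hwl⟩
  rw [← Nat.card_congr eA, ← Nat.card_congr eB]
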